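/- Let p = 2 and suppose n₂ = 2n₂′ and n₃ = 2n₃′ are both even. Then in the ring 𝔽₂[X,Y,Z]/(X^{n₁}+Y^{n₂}+Z^{n₃}, Y^{2n₂}+Y^{n₂}Z^{n₃}+Z^{2n₃}), the element Y^{n₂} + Y^{n₂′}Z^{n₃′} + Z^{n₃} is a nonzero nilpotent (its square is zero); in particular the ring is not reduced. -/

import Mathlib

open MvPolynomial

/-- Let `p = 2` and `n₂ = 2n₂′`, `n₃ = 2n₃′` both even.  In
`𝔽₂[X,Y,Z]/(X^{n₁} + Y^{n₂} + Z^{n₃}, Y^{2n₂} + Y^{n₂}Z^{n₃} + Z^{2n₃})` the element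
`Y^{n₂} + Y^{n₂′}Z^{n₃′} + Z^{n₃}` is a nonzero nilpotent (its square is zero);
in particular the ring is not reduced. -/
theorem nonreduced_of_even_exponents
    (n₁ n₂' n₃' : ℕ) (h₁ : 1 ≤ n₁) (h₂ : 1 ≤ n₂') (h₃ : 1 ≤ n₃')
    (I : Ideal (MvPolynomial (Fin 3) (ZMod 2)))
    (hI : I = Ideal.span
      ({X 0 ^ n₁ + X 1 ^ (2 * n₂') + X 2 ^ (2 * n₃'),
        X 1 ^ (2 * (2 * n₂')) + X 1 ^ (2 * n₂') * X 2 ^ (2 * n₃') + X 2 ^ (2 * (2 * n₃'))} :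
        Set (MvPolynomial (Fin 3) (ZMod 2)))) :
    Ideal.Quotient.mk I (X 1 ^ (2 * n₂') + X 1 ^ n₂' * X 2 ^ n₃' + X 2 ^ (2 * n₃')) ≠ 0 ∧
      (Ideal.Quotient.mk I (X 1 ^ (2 * n₂') + X 1 ^ n₂' * X 2 ^ n₃' + X 2 ^ (2 * n₃'))) ^ 2
        = 0 ∧
      ¬ IsReduced (MvPolynomial (Fin 3) (ZMod 2) ⧸ I) := by
  set f : MvPolynomial (Fin 3) (ZMod 2) :=
    X 1 ^ (2 * n₂') + X 1 ^ n₂' * X 2 ^ n₃' + X 2 ^ (2 * n₃') with hf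
  set g₁ : MvPolynomial (Fin 3) (ZMod 2) :=
    X 0 ^ n₁ + X 1 ^ (2 * n₂') + X 2 ^ (2 * n₃') with hg₁
  set g₂ : MvPolynomial (Fin 3) (ZMod 2) :=
    X 1 ^ (2 * (2 * n₂')) + X 1 ^ (2 * n₂') * X 2 ^ (2 * n₃') + X 2 ^ (2 * (2 * n₃')) with hg₂
  have h2 : (2 : MvPolynomial (Fin 3) (ZMod 2)) = 0 := by
    simpa using CharP.cast_eq_zero (MvPolynomial (Fin 3) (ZMod 2)) 2
  -- f ^ 2 = g₂ in characteristic 2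
  have hsq : f ^ 2 = g₂ := by
    rw [hf, hg₂]
    linear_combination (X 1 ^ (2 * n₂') * (X 1 ^ n₂' * X 2 ^ n₃')
      + X 1 ^ (2 * n₂') * X 2 ^ (2 * n₃')
      + X 1 ^ n₂' * X 2 ^ n₃' * X 2 ^ (2 * n₃')) * h2
  have hg₂I : g₂ ∈ I := by
    rw [hI]
    exact Ideal.subset_span (by simp)
  have hg₁I : g₁ ∈ I := by
    rw [hI]
    exact Ideal.subset_span (by simp)
  -- the auxiliary map to 𝔽₂[T]/(T^(4m))
  set m : ℕ := n₂' * n₃' with hm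
  set P := Polynomial (ZMod 2) with hP
  set J : Ideal P := Ideal.span {Polynomial.X ^ (4 * m)} with hJ
  set ψ : MvPolynomial (Fin 3) (ZMod 2) →ₐ[ZMod 2] P :=
    aeval ![0, Polynomial.X ^ n₃', Polynomial.X ^ n₂'] with hψ
  have hψg₁ : ψ g₁ = 0 := by
    rw [hg₁]
    simp only [hψ, map_add, map_pow, aeval_X, Matrix.cons_val_zero, Matrix.cons_val_one,
      Matrix.head_cons, Matrix.cons_val_two, Matrix.tail_cons]
    rw [zero_pow (by omega), ← pow_mul, ← pow_mul, zero_add]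
    rw [show n₃' * (2 * n₂') = n₂' * (2 * n₃') by ring]
    exact CharTwo.add_self_eq_zero _
  have hψg₂ : ψ g₂ = Polynomial.X ^ (4 * m) := by
    rw [hg₂]
    simp only [hψ, map_add, map_pow, map_mul, aeval_X, Matrix.cons_val_one, Matrix.cons_val_zero,
      Matrix.head_cons, Matrix.cons_val_two, Matrix.tail_cons]
    rw [← pow_mul, ← pow_mul, ← pow_mul, ← pow_mul, ← pow_add]
    rw [show n₃' * (2 * (2 * n₂')) = 4 * m by rw [hm]; ring,
      show n₃' * (2 * n₂') + n₂' * (2 * n₃') = 4 * m by rw [hm]; ring,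
      show n₂' * (2 * (2 * n₃')) = 4 * m by rw [hm]; ring]
    rw [CharTwo.add_self_eq_zero, zero_add]
  have hψf : ψ f = Polynomial.X ^ (2 * m) := by
    rw [hf]
    simp only [hψ, map_add, map_pow, map_mul, aeval_X, Matrix.cons_val_one, Matrix.cons_val_zero,
      Matrix.head_cons, Matrix.cons_val_two, Matrix.tail_cons]
    rw [show ((Polynomial.X : P) ^ n₃') ^ (2 * n₂') = Polynomial.X ^ (2 * m) by
        rw [← pow_mul]; congr 1; rw [hm]; ring,
      show ((Polynomial.X : P) ^ n₃') ^ n₂' * (Polynomial.X ^ n₂') ^ n₃'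
          = Polynomial.X ^ (2 * m) by
        rw [← pow_mul, ← pow_mul, ← pow_add]; congr 1; rw [hm]; ring,
      show ((Polynomial.X : P) ^ n₂') ^ (2 * n₃') = Polynomial.X ^ (2 * m) by
        rw [← pow_mul]; congr 1; rw [hm]; ring]
    rw [CharTwo.add_self_eq_zero, zero_add]
  -- I is contained in the kernel of (mk J) ∘ ψ
  have hker : I ≤ RingHom.ker ((Ideal.Quotient.mk J).comp ψ.toRingHom) := by
    rw [hI, Ideal.span_le]
    intro p hp
    simp only [Set.mem_insert_iff, Set.mem_singleton_iff] at hp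
    rcases hp with hp | hp
    · have : p = g₁ := hp
      simp [SetLike.mem_coe, RingHom.mem_ker, this, hψg₁]
    · have : p = g₂ := hp
      simp only [SetLike.mem_coe, RingHom.mem_ker, RingHom.comp_apply, AlgHom.toRingHom_eq_coe,
        RingHom.coe_coe, this, hψg₂]
      rw [Ideal.Quotient.eq_zero_iff_mem, hJ]
      exact Ideal.subset_span rfl
  have hne : Ideal.Quotient.mk I f ≠ 0 := by
    intro h0
    have hfI : f ∈ I := (Ideal.Quotient.eq_zero_iff_mem).mp h0
    have := hker hfI
    simp only [RingHom.mem_ker, RingHom.comp_apply, AlgHom.toRingHom_eq_coe,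
      RingHom.coe_coe, hψf] at this
    rw [Ideal.Quotient.eq_zero_iff_mem, hJ, Ideal.mem_span_singleton] at this
    have hdvd : (Polynomial.X : P) ^ (4 * m) ∣ Polynomial.X ^ (2 * m) := this
    rw [Polynomial.X_pow_dvd_iff] at hdvd
    have hmpos : 1 ≤ m := Nat.one_le_iff_ne_zero.mpr (by positivity)
    have := hdvd (2 * m) (by omega)
    rw [Polynomial.coeff_X_pow] at this
    simp at this
  have hz : (Ideal.Quotient.mk I f) ^ 2 = 0 := by
    rw [← map_pow, hsq, Ideal.Quotient.eq_zero_iff_mem]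
    exact hg₂I
  refine ⟨hne, hz, fun hr => hne ?_⟩
  exact IsReduced.eq_zero _ ⟨2, hz⟩
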